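/- arXiv:2305.01504 — 2 statements merged into one kernel-verified Lean document; each statement's English description precedes it below -/
import Mathlib

section
/- Let α ≥ β ≥ 0 be real numbers with α + β > 1. Then for all a₁, a₂ ∈ ℝ one has ∫_ℝ dx / (⟨x−a₁⟩^α ⟨x−a₂⟩^β) ≲ ⟨a₁−a₂⟩^{−β} φ_α(a₁−a₂), where the implicit constant depends only on α and β, and φ_α(a) = 1 if α > 1, φ_α(a) = log(1+⟨a⟩) if α = 1, and φ_α(a) = ⟨a⟩^{1−α} if α < 1. -/
open MeasureTheory

noncomputable section

/-- Japanese bracket ⟨x⟩ = √(1+x²). -/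
def jb (x : ℝ) : ℝ := Real.sqrt (1 + x ^ 2)

/-- The correction factor `φ_α` of the calculus lemma. -/
def phiA (α : ℝ) (a : ℝ) : ℝ :=
  if 1 < α then 1
  else if α = 1 then Real.log (1 + jb a)
  else jb a ^ (1 - α)

lemma jb_pos (x : ℝ) : 0 < jb x := Real.sqrt_pos.2 (by positivity)
lemma one_le_jb (x : ℝ) : 1 ≤ jb x := by
  rw [jb]
  nlinarith [Real.sq_sqrt (show (0:ℝ) ≤ 1 + x^2 by positivity), Real.sqrt_nonneg (1+x^2), sq_nonneg x, sq_nonneg (Real.sqrt (1+x^2) - 1)]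
lemma jb_neg (x : ℝ) : jb (-x) = jb x := by simp [jb]
lemma abs_le_jb (x : ℝ) : |x| ≤ jb x := by
  rw [jb, ← Real.sqrt_sq_eq_abs]
  exact Real.sqrt_le_sqrt (by nlinarith)
lemma jb_mono {x y : ℝ} (h : |x| ≤ |y|) : jb x ≤ jb y := by
  apply Real.sqrt_le_sqrt
  have := abs_nonneg x
  nlinarith [sq_abs x, sq_abs y]
lemma jb_le_iff {x R : ℝ} (hR : 0 ≤ R) : jb x ≤ Real.sqrt (1 + R^2) ↔ |x| ≤ R := by
  rw [jb, Real.sqrt_le_sqrt_iff (by positivity)]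
  constructor
  · intro h; nlinarith [abs_nonneg x, sq_abs x]
  · intro h; nlinarith [abs_nonneg x, sq_abs x]
lemma jb_rpow (x s : ℝ) : jb x ^ s = (1 + x^2) ^ (s/2) := by
  rw [jb, Real.sqrt_eq_rpow, ← Real.rpow_mul (by positivity)]
  ring_nf

lemma jb_le_jb_iff {x y : ℝ} : jb x ≤ jb y ↔ |x| ≤ |y| := by
  constructor
  · intro h
    rw [jb, jb, Real.sqrt_le_sqrt_iff (by positivity)] at h
    have := abs_nonneg x
    nlinarith [sq_abs x, sq_abs y, abs_nonneg y]
  · exact jb_mono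

lemma jb_half (a : ℝ) : jb a ≤ 2 * jb (a / 2) := by
  have h : 2 * jb (a/2) = Real.sqrt (4 + a^2) := by
    rw [jb, show (4+a^2:ℝ) = 2^2*(1+(a/2)^2) by ring, Real.sqrt_mul (by positivity),
      Real.sqrt_sq (by norm_num)]
  rw [jb, h]; exact Real.sqrt_le_sqrt (by nlinarith)

lemma integrable_jb_rpow {s : ℝ} (hs : 1 < s) : Integrable (fun x : ℝ => jb x ^ (-s)) := by
  have h := integrable_rpow_neg_one_add_norm_sq (E := ℝ) (μ := volume) (r := s) (by simpa using hs)
  refine h.congr ?_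
  filter_upwards with x
  rw [jb_rpow]
  norm_num [sq_abs]

lemma key_swap {u v α β : ℝ} (hu : 1 ≤ u) (huv : u ≤ v) (hβ : 0 ≤ β) (hαβ : β ≤ α) :
    v ^ (-α) * u ^ (-β) ≤ u ^ (-α) * v ^ (-β) := by
  have hu0 : 0 < u := by linarith
  have hv0 : 0 < v := by linarith
  have h1 : v ^ (-α) = v ^ (-β) * v ^ (-(α - β)) := by
    rw [← Real.rpow_add hv0]; ring_nf
  have h2 : u ^ (-α) = u ^ (-β) * u ^ (-(α - β)) := by
    rw [← Real.rpow_add hu0]; ring_nf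
  rw [h1, h2]
  have h3 : v ^ (-(α - β)) ≤ u ^ (-(α - β)) :=
    Real.rpow_le_rpow_of_nonpos hu0 huv (by linarith)
  have h4 : (0:ℝ) ≤ u ^ (-β) := (Real.rpow_pos_of_pos hu0 _).le
  have h5 : (0:ℝ) ≤ v ^ (-β) := (Real.rpow_pos_of_pos hv0 _).le
  nlinarith [mul_le_mul_of_nonneg_left h3 (mul_nonneg h5 h4)]

def F1 (α a : ℝ) (y : ℝ) : ℝ := Set.indicator {z : ℝ | jb z ≤ jb a} (fun z => jb z ^ (-α)) y
def F2 (s a : ℝ) (y : ℝ) : ℝ := Set.indicator {z : ℝ | jb a ≤ jb z} (fun z => jb z ^ (-s)) y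

lemma F1_nonneg (α a y : ℝ) : 0 ≤ F1 α a y :=
  Set.indicator_nonneg (fun z _ => Real.rpow_nonneg (jb_pos z).le _) y
lemma F2_nonneg (s a y : ℝ) : 0 ≤ F2 s a y :=
  Set.indicator_nonneg (fun z _ => Real.rpow_nonneg (jb_pos z).le _) y

lemma key_half {α β : ℝ} (hβ : 0 ≤ β) (x a : ℝ) (hle : jb x ≤ jb (x - a)) :
    jb x ^ (-α) * jb (x - a) ^ (-β) ≤ (jb a / 2) ^ (-β) * F1 α a x + F2 (α + β) a x := by
  have habs : |x| ≤ |x - a| := jb_le_jb_iff.1 hle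
  have h2 : |a / 2| ≤ |x - a| := by
    have : |a| ≤ |x| + |x - a| := by
      calc |a| = |x - (x - a)| := by ring_nf
        _ ≤ |x| + |x - a| := abs_sub _ _
    rw [abs_div]
    rw [abs_two]
    linarith
  have hja : jb a / 2 ≤ jb (x - a) := by
    have := (jb_half a).trans (by nlinarith [jb_mono h2] : 2 * jb (a/2) ≤ 2 * jb (x - a))
    linarith
  have hb : jb (x - a) ^ (-β) ≤ (jb a / 2) ^ (-β) :=
    Real.rpow_le_rpow_of_nonpos (by have := jb_pos a; positivity) hja (neg_nonpos.2 hβ)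
  by_cases hc : jb x ≤ jb a
  · have hF1 : F1 α a x = jb x ^ (-α) := by
      unfold F1; rw [Set.indicator_of_mem (show x ∈ {z : ℝ | jb z ≤ jb a} from hc)]
    have := mul_le_mul_of_nonneg_left hb (Real.rpow_nonneg (jb_pos x).le (-α))
    have hF2 := F2_nonneg (α + β) a x
    rw [hF1]
    nlinarith
  · push_neg at hc
    have hF2 : F2 (α + β) a x = jb x ^ (-(α + β)) := by
      unfold F2; rw [Set.indicator_of_mem (show x ∈ {z : ℝ | jb a ≤ jb z} from le_of_lt hc)]
    have hb2 : jb (x - a) ^ (-β) ≤ jb x ^ (-β) :=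
      Real.rpow_le_rpow_of_nonpos (jb_pos x) hle (neg_nonpos.2 hβ)
    have hmul : jb x ^ (-α) * jb (x - a) ^ (-β) ≤ jb x ^ (-(α + β)) := by
      have := mul_le_mul_of_nonneg_left hb2 (Real.rpow_nonneg (jb_pos x).le (-α))
      rw [show (-(α+β)) = -α + -β by ring, Real.rpow_add (jb_pos x)]
      linarith
    have hF1 := F1_nonneg α a x
    have hpos : (0:ℝ) ≤ (jb a / 2) ^ (-β) := Real.rpow_nonneg (by have := jb_pos a; positivity) _
    rw [hF2]
    nlinarith

lemma key_point {α β : ℝ} (hβ : 0 ≤ β) (hαβ : β ≤ α) (x a : ℝ) :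
    jb x ^ (-α) * jb (x - a) ^ (-β) ≤
      (jb a / 2) ^ (-β) * (F1 α a x + F1 α a (x - a)) + (F2 (α + β) a x + F2 (α + β) a (x - a)) := by
  have hpos : (0:ℝ) ≤ (jb a / 2) ^ (-β) := Real.rpow_nonneg (by have := jb_pos a; positivity) _
  rcases le_total (jb x) (jb (x - a)) with hle | hle
  · have h := key_half (α := α) hβ x a hle
    nlinarith [F1_nonneg α a (x - a), F2_nonneg (α + β) a (x - a), F1_nonneg α a x]
  · have hswap := key_swap (one_le_jb (x - a)) hle hβ hαβ
    have h := key_half (α := α) hβ (x - a) (-a) (by rw [sub_neg_eq_add, sub_add_cancel]; exact hle)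
    rw [sub_neg_eq_add, sub_add_cancel] at h
    have hFa1 : F1 α (-a) = F1 α a := by funext y; simp only [F1, jb_neg]
    have hFa2 : F2 (α + β) (-a) = F2 (α + β) a := by funext y; simp only [F2, jb_neg]
    rw [hFa1, hFa2, jb_neg] at h
    nlinarith [F1_nonneg α a x, F2_nonneg (α + β) a x]

lemma continuous_jb : Continuous jb := by
  unfold jb; fun_prop

lemma continuous_jb_rpow (t : ℝ) : Continuous fun x : ℝ => jb x ^ t :=
  continuous_jb.rpow_const (fun x => Or.inl (jb_pos x).ne')

lemma measurableSet_S1 (a : ℝ) : MeasurableSet {z : ℝ | jb z ≤ jb a} :=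
  measurableSet_le continuous_jb.measurable measurable_const

lemma measurableSet_S2 (a : ℝ) : MeasurableSet {z : ℝ | jb a ≤ jb z} :=
  measurableSet_le measurable_const continuous_jb.measurable

lemma S1_subset (a : ℝ) : {z : ℝ | jb z ≤ jb a} ⊆ Set.Icc (-(jb a)) (jb a) := by
  intro z hz
  have h1 : |z| ≤ jb a := le_trans (abs_le_jb z) hz
  exact Set.mem_Icc.2 (abs_le.1 h1)

lemma integrableOn_Icc_jb (t R : ℝ) : IntegrableOn (fun z : ℝ => jb z ^ t) (Set.Icc (-R) R) :=
  (continuous_jb_rpow t).integrableOn_Icc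

lemma F1_integrable (α a : ℝ) : Integrable (F1 α a) := by
  unfold F1
  exact (((integrableOn_Icc_jb (-α) (jb a)).mono_set (S1_subset a))).integrable_indicator
    (measurableSet_S1 a)

lemma F2_integrable {s : ℝ} (hs : 1 < s) (a : ℝ) : Integrable (F2 s a) :=
  (integrable_jb_rpow hs).indicator (measurableSet_S2 a)

lemma F1_integral_le (α a : ℝ) :
    ∫ y, F1 α a y ≤ ∫ y in Set.Icc (-(jb a)) (jb a), jb y ^ (-α) := by
  unfold F1
  rw [integral_indicator (measurableSet_S1 a)]
  exact setIntegral_mono_set (integrableOn_Icc_jb (-α) (jb a))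
    (Filter.Eventually.of_forall fun y => Real.rpow_nonneg (jb_pos y).le _)
    (HasSubset.Subset.eventuallyLE (S1_subset a))

lemma Jbound {α : ℝ} (hα : 0 ≤ α) : ∃ C : ℝ, 0 < C ∧ ∀ R : ℝ, 1 ≤ R →
    (∫ y in Set.Icc (-R) R, jb y ^ (-α)) ≤
      C * (if 1 < α then 1 else if α = 1 then Real.log (1 + R) else R ^ (1 - α)) := by
  by_cases h1 : 1 < α
  · have hnn : 0 ≤ ∫ y : ℝ, jb y ^ (-α) :=
      integral_nonneg fun y => Real.rpow_nonneg (jb_pos y).le (-α)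
    refine ⟨(∫ y : ℝ, jb y ^ (-α)) + 1, by linarith, fun R hR => ?_⟩
    rw [if_pos h1, mul_one]
    have := setIntegral_le_integral (integrable_jb_rpow h1)
      (Filter.Eventually.of_forall fun y => Real.rpow_nonneg (jb_pos y).le _)
      (s := Set.Icc (-R) R)
    linarith
  · push_neg at h1
    -- common part: ∫_{Icc} ≤ 2 + 2 * ∫ in 1..R, y ^ (-α)
    have common : ∀ R : ℝ, 1 ≤ R →
        (∫ y in Set.Icc (-R) R, jb y ^ (-α)) ≤ 2 + 2 * ∫ y in (1:ℝ)..R, y ^ (-α) := by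
      intro R hR
      have hii : ∀ c d : ℝ, IntervalIntegrable (fun y : ℝ => jb y ^ (-α)) volume c d :=
        fun c d => (continuous_jb_rpow (-α)).intervalIntegrable c d
      have hIcc : (∫ y in Set.Icc (-R) R, jb y ^ (-α)) = ∫ y in (-R)..R, jb y ^ (-α) := by
        rw [intervalIntegral.integral_of_le (by linarith), integral_Icc_eq_integral_Ioc]
      have hsplit : (∫ y in (-R)..R, jb y ^ (-α)) =
          (∫ y in (-R)..(-1), jb y ^ (-α)) + (∫ y in (-1:ℝ)..1, jb y ^ (-α))
            + ∫ y in (1:ℝ)..R, jb y ^ (-α) := by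
        rw [intervalIntegral.integral_add_adjacent_intervals (hii (-R) (-1)) (hii (-1) 1),
          intervalIntegral.integral_add_adjacent_intervals (hii (-R) 1) (hii 1 R)]
      have hmid : (∫ y in (-1:ℝ)..1, jb y ^ (-α)) ≤ 2 := by
        have := intervalIntegral.integral_mono_on (by norm_num : (-1:ℝ) ≤ 1) (hii (-1) 1)
          (intervalIntegrable_const (c := (1:ℝ)))
          (fun y _ => Real.rpow_le_one_of_one_le_of_nonpos (one_le_jb y) (neg_nonpos.2 hα))
        simp only [intervalIntegral.integral_const, smul_eq_mul] at this
        linarith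
      have hright : (∫ y in (1:ℝ)..R, jb y ^ (-α)) ≤ ∫ y in (1:ℝ)..R, y ^ (-α) := by
        apply intervalIntegral.integral_mono_on hR (hii 1 R)
        · apply ContinuousOn.intervalIntegrable
          apply ContinuousOn.rpow_const continuousOn_id
          intro y hy
          rw [Set.uIcc_of_le hR] at hy
          exact Or.inl (by simp; linarith [hy.1])
        · intro y hy
          exact Real.rpow_le_rpow_of_nonpos (by linarith [hy.1]) (le_trans (le_abs_self y) (abs_le_jb y))
            (neg_nonpos.2 hα)
      have hleft : (∫ y in (-R)..(-1), jb y ^ (-α)) = ∫ y in (1:ℝ)..R, jb y ^ (-α) := by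
        rw [show (-R) = -(R) by ring, show (-1 : ℝ) = -(1:ℝ) by ring,
          ← intervalIntegral.integral_comp_neg (fun y => jb y ^ (-α))]
        simp_rw [jb_neg]
      have hleft' : (∫ y in (-R)..(-1), jb y ^ (-α)) ≤ ∫ y in (1:ℝ)..R, y ^ (-α) := by
        rw [hleft]; exact hright
      rw [hIcc, hsplit]; linarith
    by_cases h2 : α = 1
    · refine ⟨2 / Real.log 2 + 2, by positivity, fun R hR => ?_⟩
      rw [if_neg h1.not_gt, if_pos h2]
      have hval : (∫ y in (1:ℝ)..R, y ^ (-α)) = Real.log R := by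
        rw [h2]
        simp_rw [Real.rpow_neg_one]
        rw [integral_inv_of_pos one_pos (by linarith), div_one]
      have hlog2 : Real.log 2 ≤ Real.log (1 + R) :=
        Real.log_le_log (by norm_num) (by linarith)
      have hlogR : Real.log R ≤ Real.log (1 + R) :=
        Real.log_le_log (by linarith) (by linarith)
      have h2pos : (0:ℝ) < Real.log 2 := Real.log_pos (by norm_num)
      have := common R hR
      rw [hval] at this
      have : (∫ y in Set.Icc (-R) R, jb y ^ (-α)) ≤ 2 + 2 * Real.log (1 + R) := by linarith
      have hterm : (2:ℝ) ≤ 2 / Real.log 2 * Real.log (1 + R) := by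
        rw [div_mul_eq_mul_div, le_div_iff₀ h2pos]
        nlinarith
      nlinarith [Real.log_nonneg (by linarith : (1:ℝ) ≤ 1 + R)]
    · -- α < 1
      have hα1 : α < 1 := lt_of_le_of_ne h1 h2
      have h1α : (0:ℝ) < 1 - α := by linarith
      refine ⟨2 + 2 / (1 - α), by positivity, fun R hR => ?_⟩
      rw [if_neg h1.not_gt, if_neg h2]
      have hval : (∫ y in (1:ℝ)..R, y ^ (-α)) = (R ^ (1 - α) - 1) / (1 - α) := by
        rw [integral_rpow (Or.inl (by linarith))]
        norm_num
        rw [show -α + 1 = 1 - α by ring]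
      have hR1 : (1:ℝ) ≤ R ^ (1 - α) := Real.one_le_rpow hR (by linarith)
      have := common R hR
      rw [hval] at this
      calc (∫ y in Set.Icc (-R) R, jb y ^ (-α)) ≤ 2 + 2 * ((R ^ (1-α) - 1) / (1-α)) := this
        _ ≤ 2 * R ^ (1-α) + (2 / (1-α)) * R ^ (1-α) := by
            rw [div_mul_eq_mul_div, mul_div_assoc]
            have : (R ^ (1-α) - 1) / (1-α) ≤ R ^ (1-α) / (1-α) := by
              gcongr <;> linarith
            nlinarith
        _ = (2 + 2 / (1-α)) * R ^ (1-α) := by ring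

lemma Kbound {s : ℝ} (hs : 1 < s) : ∃ C : ℝ, 0 < C ∧ ∀ a : ℝ,
    (∫ z in {z : ℝ | jb a ≤ jb z}, jb z ^ (-s)) ≤ C * jb a ^ (1 - s) := by
  set C1 : ℝ := ∫ z : ℝ, jb z ^ (-s) with hC1
  have hC1nn : 0 ≤ C1 := integral_nonneg fun z => Real.rpow_nonneg (jb_pos z).le _
  have hs0 : 0 < s - 1 := by linarith
  have hsqrt2 : (1:ℝ) < Real.sqrt 2 := by
    rw [show (1:ℝ) = Real.sqrt 1 by simp]
    exact Real.sqrt_lt_sqrt (by norm_num) (by norm_num)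
  refine ⟨(C1 + 2 / (s - 1) + 1) * Real.sqrt 2 ^ (s - 1), by positivity, fun a => ?_⟩
  have hint := integrable_jb_rpow hs
  have hnn : ∀ z : ℝ, 0 ≤ jb z ^ (-s) := fun z => Real.rpow_nonneg (jb_pos z).le _
  have hja : 0 < jb a := jb_pos a
  have hja1 : 1 ≤ jb a := one_le_jb a
  by_cases hcase : |a| ≤ 1
  · -- small a : use the whole-line integral
    have hle : (∫ z in {z : ℝ | jb a ≤ jb z}, jb z ^ (-s)) ≤ C1 :=
      setIntegral_le_integral hint (Filter.Eventually.of_forall hnn)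
    have hjas : jb a ≤ Real.sqrt 2 := by
      rw [jb, show (2:ℝ) = 1 + 1^2 by norm_num]
      exact Real.sqrt_le_sqrt (by nlinarith [sq_abs a, abs_nonneg a])
    have h2 : Real.sqrt 2 ^ (1 - s) ≤ jb a ^ (1 - s) :=
      Real.rpow_le_rpow_of_nonpos hja hjas (by linarith)
    have hmul : Real.sqrt 2 ^ (s - 1) * Real.sqrt 2 ^ (1 - s) = 1 := by
      rw [← Real.rpow_add (by positivity)]; norm_num
    have hpow_pos : (0:ℝ) < Real.sqrt 2 ^ (s - 1) := by positivity
    calc (∫ z in {z : ℝ | jb a ≤ jb z}, jb z ^ (-s)) ≤ C1 := hle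
      _ = (C1) * (Real.sqrt 2 ^ (s-1) * Real.sqrt 2 ^ (1-s)) := by rw [hmul, mul_one]
      _ ≤ (C1 + 2/(s-1) + 1) * Real.sqrt 2 ^ (s-1) * jb a ^ (1-s) := by
          have h2' := mul_le_mul_of_nonneg_left h2 (le_of_lt hpow_pos)
          nlinarith [Real.rpow_nonneg (le_of_lt hja) (1-s), div_nonneg (by norm_num : (0:ℝ) ≤ 2) hs0.le]
  · push_neg at hcase
    set c : ℝ := |a| with hc
    have hc1 : 1 < c := hcase
    have hc0 : 0 < c := by linarith
    -- T = {z | c ≤ |z|} ⊆ Iic (-c) ∪ Ici c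
    have hTsub : {z : ℝ | jb a ≤ jb z} ⊆ Set.Iic (-c) ∪ Set.Ici c := by
      intro z hz
      have : c ≤ |z| := jb_le_jb_iff.1 hz
      rcases abs_cases z with ⟨h, _⟩ | ⟨h, _⟩
      · right; rw [Set.mem_Ici]; linarith
      · left; rw [Set.mem_Iic]; linarith
    have hIntU : IntegrableOn (fun z : ℝ => jb z ^ (-s)) (Set.Iic (-c) ∪ Set.Ici c) :=
      hint.integrableOn
    have hstep1 : (∫ z in {z : ℝ | jb a ≤ jb z}, jb z ^ (-s)) ≤
        ∫ z in Set.Iic (-c) ∪ Set.Ici c, jb z ^ (-s) :=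
      setIntegral_mono_set hIntU (Filter.Eventually.of_forall hnn)
        (HasSubset.Subset.eventuallyLE hTsub)
    have hdisj : Disjoint (Set.Iic (-c)) (Set.Ici c) := by
      rw [Set.Iic_disjoint_Ici]
      exact not_le.2 (by linarith)
    have hstep2 : (∫ z in Set.Iic (-c) ∪ Set.Ici c, jb z ^ (-s)) =
        (∫ z in Set.Iic (-c), jb z ^ (-s)) + ∫ z in Set.Ici c, jb z ^ (-s) :=
      setIntegral_union hdisj measurableSet_Ici hint.integrableOn hint.integrableOn
    have hneg : (∫ z in Set.Iic (-c), jb z ^ (-s)) = ∫ z in Set.Ici c, jb z ^ (-s) := by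
      rw [← integral_comp_neg_Ioi c (fun z => jb z ^ (-s))]
      simp_rw [jb_neg]
      rw [integral_Ici_eq_integral_Ioi]
    have hIci : (∫ z in Set.Ici c, jb z ^ (-s)) ≤ c ^ (1 - s) / (s - 1) := by
      rw [integral_Ici_eq_integral_Ioi]
      have hcomp : (∫ z in Set.Ioi c, jb z ^ (-s)) ≤ ∫ z in Set.Ioi c, z ^ (-s) := by
        apply setIntegral_mono_on hint.integrableOn
          (integrableOn_Ioi_rpow_of_lt (by linarith : -s < -1) hc0) measurableSet_Ioi
        intro z hz
        rw [Set.mem_Ioi] at hz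
        exact Real.rpow_le_rpow_of_nonpos (by linarith) (le_trans (le_abs_self z) (abs_le_jb z))
          (by linarith)
      have hval : (∫ z in Set.Ioi c, z ^ (-s)) = c ^ (1 - s) / (s - 1) := by
        rw [integral_Ioi_rpow_of_lt (by linarith) hc0]
        rw [show -s + 1 = 1 - s by ring]
        rw [neg_div, ← div_neg]
        congr 1
        ring
      linarith
    -- c ≥ jb a / √2
    have hcja : jb a ≤ Real.sqrt 2 * c := by
      rw [jb, show Real.sqrt 2 * c = Real.sqrt (2 * c^2) by
        rw [Real.sqrt_mul (by norm_num), Real.sqrt_sq hc0.le]]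
      apply Real.sqrt_le_sqrt
      have : 1 ≤ c^2 := by nlinarith
      have : a^2 = c^2 := (sq_abs a).symm
      nlinarith
    have hckey : c ^ (1 - s) ≤ Real.sqrt 2 ^ (s - 1) * jb a ^ (1 - s) := by
      have h1 : jb a ^ (1 - s) ≥ (Real.sqrt 2 * c) ^ (1 - s) :=
        Real.rpow_le_rpow_of_nonpos hja hcja (by linarith)
      have h2 : (Real.sqrt 2 * c) ^ (1 - s) = Real.sqrt 2 ^ (1 - s) * c ^ (1 - s) :=
        Real.mul_rpow (by positivity) hc0.le
      have h3 : Real.sqrt 2 ^ (s - 1) * Real.sqrt 2 ^ (1 - s) = 1 := by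
        rw [← Real.rpow_add (by positivity)]; norm_num
      have hp2 : (0:ℝ) < Real.sqrt 2 ^ (s - 1) := by positivity
      have := mul_le_mul_of_nonneg_left (h2 ▸ h1) hp2.le
      calc c ^ (1-s) = (Real.sqrt 2 ^ (s-1) * Real.sqrt 2 ^ (1-s)) * c ^ (1-s) := by
            rw [h3, one_mul]
        _ = Real.sqrt 2 ^ (s-1) * (Real.sqrt 2 ^ (1-s) * c ^ (1-s)) := by ring
        _ ≤ Real.sqrt 2 ^ (s-1) * jb a ^ (1-s) := by
            apply mul_le_mul_of_nonneg_left _ hp2.le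
            rw [← h2]; exact h1
    have hfin : (2:ℝ) / (s-1) * c ^ (1-s) ≤
        (C1 + 2/(s-1) + 1) * Real.sqrt 2 ^ (s-1) * jb a ^ (1-s) := by
      have hfrac : (0:ℝ) ≤ 2 / (s-1) := by positivity
      have := mul_le_mul_of_nonneg_left hckey hfrac
      have hrest : (2/(s-1)) * (Real.sqrt 2 ^ (s-1) * jb a ^ (1-s)) ≤
          (C1 + 2/(s-1) + 1) * Real.sqrt 2 ^ (s-1) * jb a ^ (1-s) := by
        have h4 : (0:ℝ) ≤ Real.sqrt 2 ^ (s-1) * jb a ^ (1-s) := by positivity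
        nlinarith
      linarith
    calc (∫ z in {z : ℝ | jb a ≤ jb z}, jb z ^ (-s))
        ≤ (∫ z in Set.Iic (-c), jb z ^ (-s)) + ∫ z in Set.Ici c, jb z ^ (-s) := by
          rw [← hstep2]; exact hstep1
      _ = 2 * ∫ z in Set.Ici c, jb z ^ (-s) := by rw [hneg]; ring
      _ ≤ 2 * (c ^ (1-s) / (s-1)) := by linarith [hIci]
      _ = 2 / (s-1) * c ^ (1-s) := by ring
      _ ≤ (C1 + 2/(s-1) + 1) * Real.sqrt 2 ^ (s-1) * jb a ^ (1-s) := hfin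

lemma phiA_nonneg (α a : ℝ) : 0 ≤ phiA α a := by
  unfold phiA
  split_ifs with h1 h2
  · norm_num
  · exact Real.log_nonneg (by linarith [one_le_jb a])
  · exact Real.rpow_nonneg (jb_pos a).le _

lemma rpow_le_phiA (α : ℝ) : ∃ Cφ : ℝ, 0 < Cφ ∧ ∀ a : ℝ, jb a ^ (1 - α) ≤ Cφ * phiA α a := by
  by_cases h1 : 1 < α
  · refine ⟨1, one_pos, fun a => ?_⟩
    unfold phiA; rw [if_pos h1, mul_one]
    exact Real.rpow_le_one_of_one_le_of_nonpos (one_le_jb a) (by linarith)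
  · by_cases h2 : α = 1
    · have hlog2 : (0:ℝ) < Real.log 2 := Real.log_pos (by norm_num)
      refine ⟨1 / Real.log 2, by positivity, fun a => ?_⟩
      unfold phiA; rw [if_neg h1, if_pos h2, h2]
      rw [sub_self, Real.rpow_zero]
      have hl : Real.log 2 ≤ Real.log (1 + jb a) :=
        Real.log_le_log (by norm_num) (by linarith [one_le_jb a])
      rw [div_mul_eq_mul_div, one_mul, le_div_iff₀ hlog2]
      linarith
    · refine ⟨1, one_pos, fun a => ?_⟩
      unfold phiA; rw [if_neg h1, if_neg h2, one_mul]

lemma main_I {α β : ℝ} (hβ : 0 ≤ β) (hαβ : β ≤ α) (hsum : 1 < α + β) :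
    ∃ C : ℝ, 0 < C ∧ ∀ a : ℝ,
      (∫ x : ℝ, jb x ^ (-α) * jb (x - a) ^ (-β)) ≤ C * (jb a ^ (-β) * phiA α a) := by
  obtain ⟨CJ, hCJ, hJ⟩ := Jbound (α := α) (by linarith)
  obtain ⟨CK, hCK, hK⟩ := Kbound (s := α + β) hsum
  obtain ⟨Cφ, hCφ, hφ⟩ := rpow_le_phiA α
  have h2β : (0:ℝ) < (2:ℝ) ^ β := Real.rpow_pos_of_pos two_pos β
  refine ⟨2 ^ β * 2 * CJ + 2 * CK * Cφ, by nlinarith [mul_pos hCK hCφ, mul_pos h2β hCJ], fun a => ?_⟩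
  have hs : 1 < α + β := hsum
  have hja : 0 < jb a := jb_pos a
  have hF1c : Integrable (fun x : ℝ => F1 α a (x - a)) := (F1_integrable α a).comp_sub_right a
  have hF2i : Integrable (F2 (α + β) a) := F2_integrable hs a
  have hF2c : Integrable (fun x : ℝ => F2 (α + β) a (x - a)) := hF2i.comp_sub_right a
  have hGsum1 : Integrable (fun x : ℝ => F1 α a x + F1 α a (x - a)) :=
    (F1_integrable α a).add hF1c
  have hGsum2 : Integrable (fun x : ℝ => F2 (α + β) a x + F2 (α + β) a (x - a)) :=
    hF2i.add hF2c
  have hG : Integrable (fun x : ℝ =>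
      (jb a / 2) ^ (-β) * (F1 α a x + F1 α a (x - a)) +
        (F2 (α + β) a x + F2 (α + β) a (x - a))) :=
    (hGsum1.const_mul _).add hGsum2
  have hmono : (∫ x : ℝ, jb x ^ (-α) * jb (x - a) ^ (-β)) ≤
      ∫ x : ℝ, (jb a / 2) ^ (-β) * (F1 α a x + F1 α a (x - a)) +
        (F2 (α + β) a x + F2 (α + β) a (x - a)) := by
    apply integral_mono_of_nonneg
    · exact Filter.Eventually.of_forall fun x =>
        mul_nonneg (Real.rpow_nonneg (jb_pos x).le _) (Real.rpow_nonneg (jb_pos _).le _)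
    · exact hG
    · exact Filter.Eventually.of_forall fun x => key_point hβ hαβ x a
  have hval : (∫ x : ℝ, (jb a / 2) ^ (-β) * (F1 α a x + F1 α a (x - a)) +
        (F2 (α + β) a x + F2 (α + β) a (x - a))) =
      (jb a / 2) ^ (-β) * ((∫ x, F1 α a x) + ∫ x, F1 α a x) +
        ((∫ x, F2 (α + β) a x) + ∫ x, F2 (α + β) a x) := by
    rw [integral_add (hGsum1.const_mul _) hGsum2, integral_const_mul,
      integral_add (F1_integrable α a) hF1c, integral_add hF2i hF2c,
      integral_sub_right_eq_self (F1 α a) a, integral_sub_right_eq_self (F2 (α + β) a) a]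
  -- J bound
  have hJle : (∫ x, F1 α a x) ≤ CJ * phiA α a := by
    have h1 := F1_integral_le α a
    have h2 := hJ (jb a) (one_le_jb a)
    have h3 : (if 1 < α then (1:ℝ) else if α = 1 then Real.log (1 + jb a)
        else jb a ^ (1 - α)) = phiA α a := rfl
    rw [h3] at h2
    linarith
  have hJnn : 0 ≤ ∫ x, F1 α a x := integral_nonneg (F1_nonneg α a)
  -- K bound
  have hKle : (∫ x, F2 (α + β) a x) ≤ CK * (jb a ^ (-β) * jb a ^ (1 - α)) := by
    have h1 : (∫ x, F2 (α + β) a x) = ∫ z in {z : ℝ | jb a ≤ jb z}, jb z ^ (-(α + β)) := by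
      unfold F2; rw [integral_indicator (measurableSet_S2 a)]
    have h2 := hK a
    have h3 : jb a ^ (1 - (α + β)) = jb a ^ (-β) * jb a ^ (1 - α) := by
      rw [← Real.rpow_add hja]; congr 1; ring
    rw [h1]; rw [h3] at h2; linarith
  have hKnn : 0 ≤ ∫ x, F2 (α + β) a x := integral_nonneg (F2_nonneg (α + β) a)
  have hhalf : (jb a / 2) ^ (-β) = jb a ^ (-β) * 2 ^ β := by
    rw [Real.div_rpow hja.le (by norm_num : (0:ℝ) ≤ 2),
      Real.rpow_neg (by norm_num : (0:ℝ) ≤ 2)]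
    field_simp
  have hjbnn : (0:ℝ) ≤ jb a ^ (-β) := Real.rpow_nonneg hja.le _
  have hφnn : 0 ≤ phiA α a := phiA_nonneg α a
  have hφa := hφ a
  have hjb1α : (0:ℝ) ≤ jb a ^ (1 - α) := Real.rpow_nonneg hja.le _
  calc (∫ x : ℝ, jb x ^ (-α) * jb (x - a) ^ (-β))
      ≤ (jb a / 2) ^ (-β) * ((∫ x, F1 α a x) + ∫ x, F1 α a x) +
        ((∫ x, F2 (α + β) a x) + ∫ x, F2 (α + β) a x) := by rw [← hval]; exact hmono
    _ ≤ (jb a ^ (-β) * 2 ^ β) * (2 * (CJ * phiA α a)) +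
        2 * (CK * (jb a ^ (-β) * jb a ^ (1 - α))) := by
        rw [hhalf]
        have hb : (0:ℝ) ≤ jb a ^ (-β) * 2 ^ β := by positivity
        nlinarith
    _ ≤ (jb a ^ (-β) * 2 ^ β) * (2 * (CJ * phiA α a)) +
        2 * (CK * (jb a ^ (-β) * (Cφ * phiA α a))) := by
        have : jb a ^ (-β) * jb a ^ (1 - α) ≤ jb a ^ (-β) * (Cφ * phiA α a) :=
          mul_le_mul_of_nonneg_left hφa hjbnn
        nlinarith
    _ = (2 ^ β * 2 * CJ + 2 * CK * Cφ) * (jb a ^ (-β) * phiA α a) := by ring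

/-- **Calculus lemma** (Lemma 3.8, [ET, Lemma 3.3]): for `α ≥ β ≥ 0` with `α + β > 1`,
`∫ dx / (⟨x−a₁⟩^α ⟨x−a₂⟩^β) ≲ ⟨a₁−a₂⟩^{−β} φ_α(a₁−a₂)`. -/
theorem calculus_lemma (α β : ℝ) (hβ : 0 ≤ β) (hαβ : β ≤ α) (hsum : 1 < α + β) :
    ∃ C : ℝ, 0 < C ∧ ∀ a₁ a₂ : ℝ,
      (∫ x : ℝ, jb (x - a₁) ^ (-α) * jb (x - a₂) ^ (-β)) ≤
        C * (jb (a₁ - a₂) ^ (-β) * phiA α (a₁ - a₂)) := by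
  obtain ⟨C, hC, hI⟩ := main_I hβ hαβ hsum
  refine ⟨C, hC, fun a₁ a₂ => ?_⟩
  have hshift : (∫ x : ℝ, jb (x - a₁) ^ (-α) * jb (x - a₂) ^ (-β)) =
      ∫ x : ℝ, jb x ^ (-α) * jb (x - (a₂ - a₁)) ^ (-β) := by
    rw [← integral_sub_right_eq_self
      (fun y => jb y ^ (-α) * jb (y - (a₂ - a₁)) ^ (-β)) a₁]
    congr 1
    funext x
    rw [show x - a₁ - (a₂ - a₁) = x - a₂ by ring]
  have hjbsym : jb (a₂ - a₁) = jb (a₁ - a₂) := by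
    rw [show a₂ - a₁ = -(a₁ - a₂) by ring, jb_neg]
  have hphisym : phiA α (a₂ - a₁) = phiA α (a₁ - a₂) := by
    simp only [phiA, hjbsym]
  have h := hI (a₂ - a₁)
  rw [hjbsym, hphisym] at h
  rw [hshift]
  exact h
end
end

section
/- Let γ, δ ∈ ℝ and p(ξ) = γξ³ + δξ⁵. For all real numbers ξ, ξ₁, ξ₂, τ, τ₁, τ₂ with ξ = ξ₁ + ξ₂ and τ = τ₁ + τ₂, one has max( |τ − p(ξ)|, |τ₁ − p(ξ₁)|, |τ₂ − p(ξ₂)| ) ≥ (1/3) |5δ ξ ξ₁ ξ₂ (ξ² − ξξ₁ + ξ₁²) + 3γ ξ ξ₁ ξ₂|. In particular, this follows from the algebraic resonance identity p(ξ₁+ξ₂) − p(ξ₁) − p(ξ₂) = 5δ ξ ξ₁ ξ₂ (ξ² − ξξ₁ + ξ₁²) + 3γ ξ ξ₁ ξ₂ with ξ = ξ₁ + ξ₂. -/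
noncomputable section

/-- Kawahara dispersion polynomial `p(ξ) = γξ³ + δξ⁵`. -/
def pdisp (γ δ : ℝ) (ξ : ℝ) : ℝ := γ * ξ ^ 3 + δ * ξ ^ 5

/-- **Resonance identity and modulation lower bound for the Kawahara dispersion**:
if `ξ = ξ₁ + ξ₂` and `τ = τ₁ + τ₂`, then
`p(ξ₁+ξ₂) − p(ξ₁) − p(ξ₂) = 5δξξ₁ξ₂(ξ²−ξξ₁+ξ₁²) + 3γξξ₁ξ₂` and
`max(|τ−p(ξ)|, |τ₁−p(ξ₁)|, |τ₂−p(ξ₂)|) ≥ (1/3)|5δξξ₁ξ₂(ξ²−ξξ₁+ξ₁²) + 3γξξ₁ξ₂|`. -/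
theorem kawahara_resonance (γ δ ξ ξ₁ ξ₂ τ τ₁ τ₂ : ℝ)
    (hξ : ξ = ξ₁ + ξ₂) (hτ : τ = τ₁ + τ₂) :
    pdisp γ δ (ξ₁ + ξ₂) - pdisp γ δ ξ₁ - pdisp γ δ ξ₂ =
        5 * δ * ξ * ξ₁ * ξ₂ * (ξ ^ 2 - ξ * ξ₁ + ξ₁ ^ 2) + 3 * γ * ξ * ξ₁ * ξ₂ ∧
      (1 / 3 : ℝ) * |5 * δ * ξ * ξ₁ * ξ₂ * (ξ ^ 2 - ξ * ξ₁ + ξ₁ ^ 2) + 3 * γ * ξ * ξ₁ * ξ₂| ≤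
        max |τ - pdisp γ δ ξ| (max |τ₁ - pdisp γ δ ξ₁| |τ₂ - pdisp γ δ ξ₂|) := by
  subst hξ hτ
  constructor
  · simp only [pdisp]; ring
  · set M := max |τ₁ + τ₂ - pdisp γ δ (ξ₁ + ξ₂)| (max |τ₁ - pdisp γ δ ξ₁| |τ₂ - pdisp γ δ ξ₂|)
    have h1 : |τ₁ + τ₂ - pdisp γ δ (ξ₁ + ξ₂)| ≤ M := le_max_left _ _
    have h2 : |τ₁ - pdisp γ δ ξ₁| ≤ M := le_trans (le_max_left _ _) (le_max_right _ _)
    have h3 : |τ₂ - pdisp γ δ ξ₂| ≤ M := le_trans (le_max_right _ _) (le_max_right _ _)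
    have key : 5 * δ * (ξ₁ + ξ₂) * ξ₁ * ξ₂ * ((ξ₁ + ξ₂) ^ 2 - (ξ₁ + ξ₂) * ξ₁ + ξ₁ ^ 2)
        + 3 * γ * (ξ₁ + ξ₂) * ξ₁ * ξ₂ =
        (τ₁ - pdisp γ δ ξ₁) + (τ₂ - pdisp γ δ ξ₂) - (τ₁ + τ₂ - pdisp γ δ (ξ₁ + ξ₂)) := by
      simp only [pdisp]; ring
    rw [key]
    calc (1/3 : ℝ) * |(τ₁ - pdisp γ δ ξ₁) + (τ₂ - pdisp γ δ ξ₂) - (τ₁ + τ₂ - pdisp γ δ (ξ₁ + ξ₂))|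
        ≤ (1/3 : ℝ) * (|τ₁ - pdisp γ δ ξ₁| + |τ₂ - pdisp γ δ ξ₂| + |τ₁ + τ₂ - pdisp γ δ (ξ₁ + ξ₂)|) := by
          apply mul_le_mul_of_nonneg_left _ (by norm_num)
          exact le_trans (abs_sub _ _) (by gcongr; exact abs_add_le _ _)
      _ ≤ (1/3 : ℝ) * (M + M + M) := by gcongr
      _ = M := by ring
end
end
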